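/- (Equation (41) of the paper: concave lower bound on the channel-dispersion penalty of the common message.) Fix the channels H_{lk,i} (so H̄_{lk,i} = H_{lk,i}) and fix reference precoders {W̄} = {W̄_i, W̄_{ij}}. Assume σ² > 0, n > 0, q_c ≥ 0 and, for the pair (l,k) considered, ζ̄_{c,lk} := 2 Tr(S̄_{c,lk}(S̄_{c,lk} + D̄_{c,lk})^{-1}) > 0. Then for every choice of precoders {W} = {W_i, W_{ij}}, writing ζ_{c,lk} := 2 Tr(S_{c,lk}(S_{c,lk} + D_{c,lk})^{-1}) (a nonnegative real number): −q_c·√(ζ_{c,lk}/n) ≥ −q_c·√(ζ̄_{c,lk}/(4n)) − q_c·N_u/√(n·ζ̄_{c,lk}) + (2q_c/√(n·ζ̄_{c,lk}))·Σ_{i=1}^{L} Σ_{j=1}^{K} Re Tr((S̄_{c,lk} + D̄_{c,lk})^{-1} H_{lk,i} W̄_{ij} W_{ij}^H H_{lk,i}^H) + (2q_c/√(n·ζ̄_{c,lk}))·Σ_{i ≠ l} Re Tr((S̄_{c,lk} + D̄_{c,lk})^{-1} H_{lk,i} W̄_{i} W_{i}^H H_{lk,i}^H) − (q_c/√(n·ζ̄_{c,lk}))·Re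 Tr((S̄_{c,lk} + D̄_{c,lk})^{-1} D̄_{c,lk} (S̄_{c,lk} + D̄_{c,lk})^{-1} (S_{c,lk} + D_{c,lk})), where barred quantities are evaluated at {W̄} and unbarred quantities at {W}, and N_u = Tr(I) is the dimension of the receive space. -/

import Mathlib

open Matrix Finset
open scoped ComplexOrder

noncomputable section RSMA

variable {L K Nu NBS : ℕ}

/-- Transmit covariance `C_i = W_iW_iᴴ + Σ_j W_{ij}W_{ij}ᴴ` of base station `i`. -/
def Cmat (Wc : Fin L → Matrix (Fin NBS) (Fin NBS) ℂ)
    (Wp : Fin L → Fin K → Matrix (Fin NBS) (Fin NBS) ℂ) (i : Fin L) :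
    Matrix (Fin NBS) (Fin NBS) ℂ :=
  Wc i * (Wc i)ᴴ + ∑ j : Fin K, Wp i j * (Wp i j)ᴴ

/-- Private-signal covariance `S_{lk} = H_{lk,l}W_{lk}(H_{lk,l}W_{lk})ᴴ`. -/
def Smat (H : Fin L → Fin K → Fin L → Matrix (Fin Nu) (Fin NBS) ℂ)
    (Wp : Fin L → Fin K → Matrix (Fin NBS) (Fin NBS) ℂ)
    (l : Fin L) (k : Fin K) : Matrix (Fin Nu) (Fin Nu) ℂ :=
  (H l k l * Wp l k) * (H l k l * Wp l k)ᴴ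

/-- Common-signal covariance `S_{c,lk} = H_{lk,l}W_{l}(H_{lk,l}W_{l})ᴴ`. -/
def Scmat (H : Fin L → Fin K → Fin L → Matrix (Fin Nu) (Fin NBS) ℂ)
    (Wc : Fin L → Matrix (Fin NBS) (Fin NBS) ℂ)
    (l : Fin L) (k : Fin K) : Matrix (Fin Nu) (Fin Nu) ℂ :=
  (H l k l * Wc l) * (H l k l * Wc l)ᴴ

/-- Interference-plus-noise covariance
`D_{lk} = σ²I + Σ_{j≠k} H_{lk,l}W_{lj}(H_{lk,l}W_{lj})ᴴ + Σ_{i≠l} H_{lk,i}C_iH_{lk,i}ᴴ`. -/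
def Dmat (σ2 : ℝ) (H : Fin L → Fin K → Fin L → Matrix (Fin Nu) (Fin NBS) ℂ)
    (Wc : Fin L → Matrix (Fin NBS) (Fin NBS) ℂ)
    (Wp : Fin L → Fin K → Matrix (Fin NBS) (Fin NBS) ℂ)
    (l : Fin L) (k : Fin K) : Matrix (Fin Nu) (Fin Nu) ℂ :=
  (σ2 : ℂ) • (1 : Matrix (Fin Nu) (Fin Nu) ℂ)
    + ∑ j ∈ Finset.univ.erase k, (H l k l * Wp l j) * (H l k l * Wp l j)ᴴ
    + ∑ i ∈ Finset.univ.erase l, H l k i * Cmat Wc Wp i * (H l k i)ᴴ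

/-- `D_{c,lk} = D_{lk} + S_{lk}`. -/
def Dcmat (σ2 : ℝ) (H : Fin L → Fin K → Fin L → Matrix (Fin Nu) (Fin NBS) ℂ)
    (Wc : Fin L → Matrix (Fin NBS) (Fin NBS) ℂ)
    (Wp : Fin L → Fin K → Matrix (Fin NBS) (Fin NBS) ℂ)
    (l : Fin L) (k : Fin K) : Matrix (Fin Nu) (Fin Nu) ℂ :=
  Dmat σ2 H Wc Wp l k + Smat H Wp l k

/-- Channel dispersion of the private message: `ζ'_{lk} = 2 Tr(S_{lk} D_{c,lk}⁻¹)`. -/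
def zetaP (σ2 : ℝ) (H : Fin L → Fin K → Fin L → Matrix (Fin Nu) (Fin NBS) ℂ)
    (Wc : Fin L → Matrix (Fin NBS) (Fin NBS) ℂ)
    (Wp : Fin L → Fin K → Matrix (Fin NBS) (Fin NBS) ℂ)
    (l : Fin L) (k : Fin K) : ℝ :=
  2 * ((Smat H Wp l k * (Dcmat σ2 H Wc Wp l k)⁻¹).trace).re

/-- Channel dispersion of the common message:
`ζ_{c,lk} = 2 Tr(S_{c,lk}(S_{c,lk} + D_{c,lk})⁻¹)`. -/
def zetaC (σ2 : ℝ) (H : Fin L → Fin K → Fin L → Matrix (Fin Nu) (Fin NBS) ℂ)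
    (Wc : Fin L → Matrix (Fin NBS) (Fin NBS) ℂ)
    (Wp : Fin L → Fin K → Matrix (Fin NBS) (Fin NBS) ℂ)
    (l : Fin L) (k : Fin K) : ℝ :=
  2 * ((Scmat H Wc l k * (Scmat H Wc l k + Dcmat σ2 H Wc Wp l k)⁻¹).trace).re

/-- Finite-blocklength private rate
`r_{p,lk} = log det(I + D_{lk}⁻¹S_{lk}) − q_p √(2Tr(S_{lk}D_{c,lk}⁻¹)/n)`. -/
def rpRate (σ2 nn qp : ℝ) (H : Fin L → Fin K → Fin L → Matrix (Fin Nu) (Fin NBS) ℂ)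
    (Wc : Fin L → Matrix (Fin NBS) (Fin NBS) ℂ)
    (Wp : Fin L → Fin K → Matrix (Fin NBS) (Fin NBS) ℂ)
    (l : Fin L) (k : Fin K) : ℝ :=
  Real.log ((1 + (Dmat σ2 H Wc Wp l k)⁻¹ * Smat H Wp l k).det.re)
    - qp * Real.sqrt (zetaP σ2 H Wc Wp l k / nn)

/-- Finite-blocklength common rate
`r_{c,lk} = log det(I + D_{c,lk}⁻¹S_{c,lk}) − q_c √(2Tr(S_{c,lk}(S_{c,lk}+D_{c,lk})⁻¹)/n)`. -/
def rcRate (σ2 nn qc : ℝ) (H : Fin L → Fin K → Fin L → Matrix (Fin Nu) (Fin NBS) ℂ)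
    (Wc : Fin L → Matrix (Fin NBS) (Fin NBS) ℂ)
    (Wp : Fin L → Fin K → Matrix (Fin NBS) (Fin NBS) ℂ)
    (l : Fin L) (k : Fin K) : ℝ :=
  Real.log ((1 + (Dcmat σ2 H Wc Wp l k)⁻¹ * Scmat H Wc l k).det.re)
    - qc * Real.sqrt (zetaC σ2 H Wc Wp l k / nn)


/-! Auxiliary lemmas -/

lemma traceRe_nonneg {n : Type*} [Fintype n] {M : Matrix n n ℂ} (hM : M.PosSemidef) :
    0 ≤ M.trace.re := by
  classical
  have h : ∀ i, 0 ≤ (M i i).re := fun i => by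
    have := hM.re_dotProduct_nonneg (Pi.single i 1)
    simpa [dotProduct, mulVec, Pi.single_apply, Finset.mul_sum, mul_ite] using this
  rw [Matrix.trace, Complex.re_sum]
  exact Finset.sum_nonneg fun i _ => h i

lemma traceRe_mul_nonneg {n m : Type*} [Fintype n] [Fintype m]
    (U : Matrix n m ℂ) {X : Matrix n n ℂ} (hX : X.PosSemidef) :
    0 ≤ ((U * Uᴴ * X).trace).re := by
  have h : (U * Uᴴ * X).trace = (Uᴴ * X * U).trace := by
    rw [Matrix.trace_mul_comm (U * Uᴴ) X, ← Matrix.mul_assoc, Matrix.trace_mul_comm (X * U) Uᴴ,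
      Matrix.mul_assoc]
  rw [h]
  exact traceRe_nonneg (hX.conjTranspose_mul_mul_same U)

lemma posSemidef_sum' {ι n : Type*} [Fintype n] (s : Finset ι) (f : ι → Matrix n n ℂ)
    (h : ∀ i ∈ s, (f i).PosSemidef) : (∑ i ∈ s, f i).PosSemidef :=
  Finset.sum_induction f _ (fun _ _ ha hb => ha.add hb) Matrix.PosSemidef.zero h

lemma key_lin {n m : Type*} [Fintype n] [Fintype m] [DecidableEq n]
    {T Tb : Matrix n n ℂ} (hT : T.PosDef) (hTb : Tb.PosDef)
    (U Ub : Matrix n m ℂ) :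
    2 * ((Tb⁻¹ * (Ub * Uᴴ)).trace).re - ((Tb⁻¹ * (Ub * Ubᴴ) * (Tb⁻¹ * T)).trace).re
      ≤ ((U * Uᴴ * T⁻¹).trace).re := by
  have hdet : IsUnit T.det := isUnit_iff_ne_zero.mpr hT.det_pos.ne'
  have hAT : T⁻¹ * T = 1 := Matrix.nonsing_inv_mul T hdet
  have hTA : T * T⁻¹ = 1 := Matrix.mul_nonsing_inv T hdet
  have c1 : ∀ X : Matrix n m ℂ, T⁻¹ * (T * X) = X := fun X => by
    rw [← Matrix.mul_assoc, hAT, Matrix.one_mul]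
  have c2 : ∀ X : Matrix n m ℂ, T * (T⁻¹ * X) = X := fun X => by
    rw [← Matrix.mul_assoc, hTA, Matrix.one_mul]
  set V := U - T * (Tb⁻¹ * Ub) with hV
  have h0 : 0 ≤ ((Vᴴ * T⁻¹ * V).trace).re :=
    traceRe_nonneg (hT.inv.posSemidef.conjTranspose_mul_mul_same V)
  have hexp : Vᴴ * T⁻¹ * V
      = Uᴴ * (T⁻¹ * U) - Uᴴ * (Tb⁻¹ * Ub) - Ubᴴ * (Tb⁻¹ * U)
        + Ubᴴ * (Tb⁻¹ * (T * (Tb⁻¹ * Ub))) := by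
    simp only [hV, conjTranspose_sub, conjTranspose_mul, hTb.inv.isHermitian.eq,
      hT.isHermitian.eq, Matrix.sub_mul, Matrix.mul_sub, Matrix.mul_assoc, c1, c2]
    abel
  have e1 : (Uᴴ * (T⁻¹ * U)).trace = (U * Uᴴ * T⁻¹).trace := by
    rw [Matrix.trace_mul_comm Uᴴ (T⁻¹ * U), Matrix.mul_assoc,
      Matrix.trace_mul_comm T⁻¹ (U * Uᴴ)]
  have e2 : (Uᴴ * (Tb⁻¹ * Ub)).trace = (Tb⁻¹ * (Ub * Uᴴ)).trace := by
    rw [Matrix.trace_mul_comm Uᴴ (Tb⁻¹ * Ub), Matrix.mul_assoc]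
  have e3 : ((Ubᴴ * (Tb⁻¹ * U)).trace).re = ((Tb⁻¹ * (Ub * Uᴴ)).trace).re := by
    have h1 : (Ubᴴ * (Tb⁻¹ * U)).trace = (Tb⁻¹ * (U * Ubᴴ)).trace := by
      rw [Matrix.trace_mul_comm Ubᴴ (Tb⁻¹ * U), Matrix.mul_assoc]
    have h2 : (Tb⁻¹ * (U * Ubᴴ))ᴴ = (Ub * Uᴴ) * Tb⁻¹ := by
      simp [conjTranspose_mul, hTb.inv.isHermitian.eq, Matrix.mul_assoc]
    have h3 : (Tb⁻¹ * (U * Ubᴴ)).trace = star (((Ub * Uᴴ) * Tb⁻¹).trace) := by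
      rw [← h2, Matrix.trace_conjTranspose, star_star]
    rw [h1, h3, Matrix.trace_mul_comm (Ub * Uᴴ) Tb⁻¹]
    exact Complex.conj_re _
  have e4 : (Ubᴴ * (Tb⁻¹ * (T * (Tb⁻¹ * Ub)))).trace
      = (Tb⁻¹ * (Ub * Ubᴴ) * (Tb⁻¹ * T)).trace := by
    rw [Matrix.trace_mul_comm Ubᴴ (Tb⁻¹ * (T * (Tb⁻¹ * Ub)))]
    rw [show Tb⁻¹ * (T * (Tb⁻¹ * Ub)) * Ubᴴ = (Tb⁻¹ * T) * (Tb⁻¹ * (Ub * Ubᴴ)) by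
      simp only [Matrix.mul_assoc]]
    rw [Matrix.trace_mul_comm (Tb⁻¹ * T) (Tb⁻¹ * (Ub * Ubᴴ)), ← Matrix.mul_assoc]
  rw [hexp, Matrix.trace_add, Matrix.trace_sub, Matrix.trace_sub, e1, e2, e4,
    Complex.add_re, Complex.sub_re, Complex.sub_re, e3] at h0
  linarith

lemma Dcmat_decomp {L K Nu NBS : ℕ} (σ2 : ℝ)
    (H : Fin L → Fin K → Fin L → Matrix (Fin Nu) (Fin NBS) ℂ)
    (Wc : Fin L → Matrix (Fin NBS) (Fin NBS) ℂ)
    (Wp : Fin L → Fin K → Matrix (Fin NBS) (Fin NBS) ℂ)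
    (l : Fin L) (k : Fin K) :
    Dcmat σ2 H Wc Wp l k
      = (σ2 : ℂ) • (1 : Matrix (Fin Nu) (Fin Nu) ℂ)
        + ((∑ i : Fin L, ∑ j : Fin K, (H l k i * Wp i j) * (H l k i * Wp i j)ᴴ)
          + ∑ i ∈ Finset.univ.erase l, (H l k i * Wc i) * (H l k i * Wc i)ᴴ) := by
  have e_i : (∑ i ∈ Finset.univ.erase l, H l k i * Cmat Wc Wp i * (H l k i)ᴴ)
      = (∑ i ∈ Finset.univ.erase l, (H l k i * Wc i) * (H l k i * Wc i)ᴴ)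
        + ∑ i ∈ Finset.univ.erase l, ∑ j : Fin K,
            (H l k i * Wp i j) * (H l k i * Wp i j)ᴴ := by
    rw [← Finset.sum_add_distrib]
    refine Finset.sum_congr rfl fun i _ => ?_
    simp only [Cmat, Matrix.mul_add, Matrix.add_mul, Matrix.mul_sum, Matrix.sum_mul,
      conjTranspose_mul, Matrix.mul_assoc]
  have e_il : (∑ i : Fin L, ∑ j : Fin K, (H l k i * Wp i j) * (H l k i * Wp i j)ᴴ)
      = (∑ i ∈ Finset.univ.erase l, ∑ j : Fin K, (H l k i * Wp i j) * (H l k i * Wp i j)ᴴ)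
        + ∑ j : Fin K, (H l k l * Wp l j) * (H l k l * Wp l j)ᴴ :=
    (Finset.sum_erase_add _ _ (Finset.mem_univ l)).symm
  have e_j : (∑ j : Fin K, (H l k l * Wp l j) * (H l k l * Wp l j)ᴴ)
      = (∑ j ∈ Finset.univ.erase k, (H l k l * Wp l j) * (H l k l * Wp l j)ᴴ)
        + (H l k l * Wp l k) * (H l k l * Wp l k)ᴴ :=
    (Finset.sum_erase_add _ _ (Finset.mem_univ k)).symm
  unfold Dcmat Dmat Smat
  rw [e_i, e_il, e_j]
  abel

lemma T_posDef {L K Nu NBS : ℕ} {σ2 : ℝ} (hσ : 0 < σ2)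
    (H : Fin L → Fin K → Fin L → Matrix (Fin Nu) (Fin NBS) ℂ)
    (Wc : Fin L → Matrix (Fin NBS) (Fin NBS) ℂ)
    (Wp : Fin L → Fin K → Matrix (Fin NBS) (Fin NBS) ℂ)
    (l : Fin L) (k : Fin K) :
    (Scmat H Wc l k + Dcmat σ2 H Wc Wp l k).PosDef := by
  rw [Dcmat_decomp]
  have h1 : ((σ2 : ℂ) • (1 : Matrix (Fin Nu) (Fin Nu) ℂ)).PosDef := by
    rw [Matrix.smul_one_eq_diagonal]
    exact Matrix.PosDef.diagonal fun _ => Complex.zero_lt_real.mpr hσ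
  have h2 : ((∑ i : Fin L, ∑ j : Fin K, (H l k i * Wp i j) * (H l k i * Wp i j)ᴴ)
      + ∑ i ∈ Finset.univ.erase l, (H l k i * Wc i) * (H l k i * Wc i)ᴴ).PosSemidef := by
    refine Matrix.PosSemidef.add (posSemidef_sum' _ _ fun i _ => posSemidef_sum' _ _
      fun j _ => Matrix.posSemidef_self_mul_conjTranspose _)
      (posSemidef_sum' _ _ fun i _ => Matrix.posSemidef_self_mul_conjTranspose _)
  exact Matrix.PosDef.posSemidef_add
    (Matrix.posSemidef_self_mul_conjTranspose (H l k l * Wc l)) (h1.add_posSemidef h2)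

set_option maxHeartbeats 1000000 in
/-- **Equation (41) of the paper.** Concave lower bound on the channel-dispersion
penalty of the common message: with the channels fixed (so `H̄ = H`) and reference
precoders `{W̄} = (Wcb, Wpb)`, assuming `σ² > 0`, `n > 0`, `q_c ≥ 0` and
`ζ̄_{c,lk} > 0`, for every choice of precoders `{W} = (Wc, Wp)`:
`−q_c √(ζ_{c,lk}/n) ≥ −q_c √(ζ̄_{c,lk}/(4n)) − q_c N_u/√(n ζ̄_{c,lk})
  + (2q_c/√(n ζ̄_{c,lk})) Σ_{ij} Re Tr((S̄_{c,lk}+D̄_{c,lk})⁻¹ H_{lk,i} W̄_{ij} W_{ij}ᴴ H_{lk,i}ᴴ)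
  + (2q_c/√(n ζ̄_{c,lk})) Σ_{i≠l} Re Tr((S̄_{c,lk}+D̄_{c,lk})⁻¹ H_{lk,i} W̄_{i} W_{i}ᴴ H_{lk,i}ᴴ)
  − (q_c/√(n ζ̄_{c,lk})) Re Tr((S̄_{c,lk}+D̄_{c,lk})⁻¹ D̄_{c,lk} (S̄_{c,lk}+D̄_{c,lk})⁻¹ (S_{c,lk}+D_{c,lk}))`,
where `N_u = Tr(I)` is the dimension of the receive space. -/
theorem dispersion_penalty_lower_bound {L K Nu NBS : ℕ}
    (σ2 nn qc : ℝ) (hσ : 0 < σ2) (hn : 0 < nn) (hqc : 0 ≤ qc)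
    (H : Fin L → Fin K → Fin L → Matrix (Fin Nu) (Fin NBS) ℂ)
    (Wcb : Fin L → Matrix (Fin NBS) (Fin NBS) ℂ)
    (Wpb : Fin L → Fin K → Matrix (Fin NBS) (Fin NBS) ℂ)
    (l : Fin L) (k : Fin K)
    (hζ : 0 < zetaC σ2 H Wcb Wpb l k)
    (Wc : Fin L → Matrix (Fin NBS) (Fin NBS) ℂ)
    (Wp : Fin L → Fin K → Matrix (Fin NBS) (Fin NBS) ℂ) :
    -(qc * Real.sqrt (zetaC σ2 H Wc Wp l k / nn)) ≥
      -(qc * Real.sqrt (zetaC σ2 H Wcb Wpb l k / (4 * nn)))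
        - qc * (Nu : ℝ) / Real.sqrt (nn * zetaC σ2 H Wcb Wpb l k)
        + (2 * qc / Real.sqrt (nn * zetaC σ2 H Wcb Wpb l k)) *
            ∑ i : Fin L, ∑ j : Fin K,
              (((Scmat H Wcb l k + Dcmat σ2 H Wcb Wpb l k)⁻¹ *
                  H l k i * Wpb i j * (Wp i j)ᴴ * (H l k i)ᴴ).trace).re
        + (2 * qc / Real.sqrt (nn * zetaC σ2 H Wcb Wpb l k)) *
            ∑ i ∈ Finset.univ.erase l,
              (((Scmat H Wcb l k + Dcmat σ2 H Wcb Wpb l k)⁻¹ *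
                  H l k i * Wcb i * (Wc i)ᴴ * (H l k i)ᴴ).trace).re
        - (qc / Real.sqrt (nn * zetaC σ2 H Wcb Wpb l k)) *
            (((Scmat H Wcb l k + Dcmat σ2 H Wcb Wpb l k)⁻¹ *
                Dcmat σ2 H Wcb Wpb l k *
                (Scmat H Wcb l k + Dcmat σ2 H Wcb Wpb l k)⁻¹ *
                (Scmat H Wc l k + Dcmat σ2 H Wc Wp l k)).trace).re := by
  classical
  set Tb := Scmat H Wcb l k + Dcmat σ2 H Wcb Wpb l k with hTbdef
  set Tm := Scmat H Wc l k + Dcmat σ2 H Wc Wp l k with hTmdef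
  have hTbPD : Tb.PosDef := T_posDef hσ H Wcb Wpb l k
  have hTmPD : Tm.PosDef := T_posDef hσ H Wc Wp l k
  set z := zetaC σ2 H Wc Wp l k with hzdef
  set zb := zetaC σ2 H Wcb Wpb l k with hzbdef
  set A := ∑ i : Fin L, ∑ j : Fin K,
      ((Tb⁻¹ * H l k i * Wpb i j * (Wp i j)ᴴ * (H l k i)ᴴ).trace).re with hA
  set B := ∑ i ∈ Finset.univ.erase l,
      ((Tb⁻¹ * H l k i * Wcb i * (Wc i)ᴴ * (H l k i)ᴴ).trace).re with hB
  set C := ((Tb⁻¹ * Dcmat σ2 H Wcb Wpb l k * Tb⁻¹ * Tm).trace).re with hC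
  -- term-wise linearization inequalities
  have kP : ∀ (i : Fin L) (j : Fin K),
      2 * ((Tb⁻¹ * ((H l k i * Wpb i j) * (H l k i * Wp i j)ᴴ)).trace).re
        - ((Tb⁻¹ * ((H l k i * Wpb i j) * (H l k i * Wpb i j)ᴴ) * (Tb⁻¹ * Tm)).trace).re
      ≤ (((H l k i * Wp i j) * (H l k i * Wp i j)ᴴ * Tm⁻¹).trace).re :=
    fun i j => key_lin hTmPD hTbPD _ _
  have kQ : ∀ i : Fin L,
      2 * ((Tb⁻¹ * ((H l k i * Wcb i) * (H l k i * Wc i)ᴴ)).trace).re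
        - ((Tb⁻¹ * ((H l k i * Wcb i) * (H l k i * Wcb i)ᴴ) * (Tb⁻¹ * Tm)).trace).re
      ≤ (((H l k i * Wc i) * (H l k i * Wc i)ᴴ * Tm⁻¹).trace).re :=
    fun i => key_lin hTmPD hTbPD _ _
  have hUU : ((Real.sqrt σ2 : ℂ) • (1 : Matrix (Fin Nu) (Fin Nu) ℂ))
      * ((Real.sqrt σ2 : ℂ) • (1 : Matrix (Fin Nu) (Fin Nu) ℂ))ᴴ
      = (σ2 : ℂ) • (1 : Matrix (Fin Nu) (Fin Nu) ℂ) := by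
    rw [Matrix.conjTranspose_smul, Matrix.conjTranspose_one, Matrix.smul_mul,
      Matrix.mul_smul, Matrix.mul_one, smul_smul]
    congr 1
    rw [Complex.star_def, Complex.conj_ofReal, ← Complex.ofReal_mul,
      Real.mul_self_sqrt hσ.le]
  have kσ : 2 * ((Tb⁻¹ * ((σ2 : ℂ) • (1 : Matrix (Fin Nu) (Fin Nu) ℂ))).trace).re
        - ((Tb⁻¹ * ((σ2 : ℂ) • (1 : Matrix (Fin Nu) (Fin Nu) ℂ)) * (Tb⁻¹ * Tm)).trace).re
      ≤ (((σ2 : ℂ) • (1 : Matrix (Fin Nu) (Fin Nu) ℂ) * Tm⁻¹).trace).re := by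
    have := key_lin hTmPD hTbPD ((Real.sqrt σ2 : ℂ) • (1 : Matrix (Fin Nu) (Fin Nu) ℂ))
      ((Real.sqrt σ2 : ℂ) • (1 : Matrix (Fin Nu) (Fin Nu) ℂ))
    rwa [hUU] at this
  have hσtr : 0 ≤ ((Tb⁻¹ * ((σ2 : ℂ) • (1 : Matrix (Fin Nu) (Fin Nu) ℂ))).trace).re := by
    have h1 : (Tb⁻¹ * ((σ2 : ℂ) • (1 : Matrix (Fin Nu) (Fin Nu) ℂ))).trace
        = (σ2 : ℂ) * Tb⁻¹.trace := by
      rw [Matrix.mul_smul, Matrix.mul_one, Matrix.trace_smul, smul_eq_mul]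
    rw [h1, Complex.re_ofReal_mul]
    exact mul_nonneg hσ.le (traceRe_nonneg hTbPD.inv.posSemidef)
  -- sum the inequalities
  have SP : 2 * (∑ i : Fin L, ∑ j : Fin K,
        ((Tb⁻¹ * ((H l k i * Wpb i j) * (H l k i * Wp i j)ᴴ)).trace).re)
      - (∑ i : Fin L, ∑ j : Fin K,
        ((Tb⁻¹ * ((H l k i * Wpb i j) * (H l k i * Wpb i j)ᴴ) * (Tb⁻¹ * Tm)).trace).re)
      ≤ ∑ i : Fin L, ∑ j : Fin K,
        (((H l k i * Wp i j) * (H l k i * Wp i j)ᴴ * Tm⁻¹).trace).re := by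
    have heq : 2 * (∑ i : Fin L, ∑ j : Fin K,
          ((Tb⁻¹ * ((H l k i * Wpb i j) * (H l k i * Wp i j)ᴴ)).trace).re)
        - (∑ i : Fin L, ∑ j : Fin K,
          ((Tb⁻¹ * ((H l k i * Wpb i j) * (H l k i * Wpb i j)ᴴ) * (Tb⁻¹ * Tm)).trace).re)
        = ∑ i : Fin L, ∑ j : Fin K,
            (2 * ((Tb⁻¹ * ((H l k i * Wpb i j) * (H l k i * Wp i j)ᴴ)).trace).re
              - ((Tb⁻¹ * ((H l k i * Wpb i j) * (H l k i * Wpb i j)ᴴ)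
                  * (Tb⁻¹ * Tm)).trace).re) := by
      rw [Finset.mul_sum, ← Finset.sum_sub_distrib]
      exact Finset.sum_congr rfl fun i _ => by
        rw [Finset.mul_sum, ← Finset.sum_sub_distrib]
    rw [heq]
    exact Finset.sum_le_sum fun i _ => Finset.sum_le_sum fun j _ => kP i j
  have SQ : 2 * (∑ i ∈ Finset.univ.erase l,
        ((Tb⁻¹ * ((H l k i * Wcb i) * (H l k i * Wc i)ᴴ)).trace).re)
      - (∑ i ∈ Finset.univ.erase l,
        ((Tb⁻¹ * ((H l k i * Wcb i) * (H l k i * Wcb i)ᴴ) * (Tb⁻¹ * Tm)).trace).re)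
      ≤ ∑ i ∈ Finset.univ.erase l,
        (((H l k i * Wc i) * (H l k i * Wc i)ᴴ * Tm⁻¹).trace).re := by
    rw [Finset.mul_sum, ← Finset.sum_sub_distrib]
    exact Finset.sum_le_sum fun i _ => kQ i
  -- decomposition of the traces
  have E1 : ((Dcmat σ2 H Wc Wp l k * Tm⁻¹).trace).re
      = (((σ2 : ℂ) • (1 : Matrix (Fin Nu) (Fin Nu) ℂ) * Tm⁻¹).trace).re
        + ((∑ i : Fin L, ∑ j : Fin K,
            (((H l k i * Wp i j) * (H l k i * Wp i j)ᴴ * Tm⁻¹).trace).re)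
          + ∑ i ∈ Finset.univ.erase l,
            (((H l k i * Wc i) * (H l k i * Wc i)ᴴ * Tm⁻¹).trace).re) := by
    rw [Dcmat_decomp σ2 H Wc Wp l k]
    simp only [Matrix.add_mul, Matrix.sum_mul, Matrix.trace_add, Matrix.trace_sum,
      Complex.add_re, Complex.re_sum]
  have E2 : C
      = ((Tb⁻¹ * ((σ2 : ℂ) • (1 : Matrix (Fin Nu) (Fin Nu) ℂ)) * (Tb⁻¹ * Tm)).trace).re
        + ((∑ i : Fin L, ∑ j : Fin K,
            ((Tb⁻¹ * ((H l k i * Wpb i j) * (H l k i * Wpb i j)ᴴ) * (Tb⁻¹ * Tm)).trace).re)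
          + ∑ i ∈ Finset.univ.erase l,
            ((Tb⁻¹ * ((H l k i * Wcb i) * (H l k i * Wcb i)ᴴ) * (Tb⁻¹ * Tm)).trace).re) := by
    rw [hC, Dcmat_decomp σ2 H Wcb Wpb l k]
    simp only [Matrix.mul_add, Matrix.add_mul, Matrix.mul_sum, Matrix.sum_mul,
      Matrix.trace_add, Matrix.trace_sum, Complex.add_re, Complex.re_sum, Matrix.mul_assoc]
  have E3 : A = ∑ i : Fin L, ∑ j : Fin K,
      ((Tb⁻¹ * ((H l k i * Wpb i j) * (H l k i * Wp i j)ᴴ)).trace).re := by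
    rw [hA]
    refine Finset.sum_congr rfl fun i _ => Finset.sum_congr rfl fun j _ => ?_
    congr 2
    simp only [conjTranspose_mul, Matrix.mul_assoc]
  have E4 : B = ∑ i ∈ Finset.univ.erase l,
      ((Tb⁻¹ * ((H l k i * Wcb i) * (H l k i * Wc i)ᴴ)).trace).re := by
    rw [hB]
    refine Finset.sum_congr rfl fun i _ => ?_
    congr 2
    simp only [conjTranspose_mul, Matrix.mul_assoc]
  have hDT : 2 * A + 2 * B - C ≤ ((Dcmat σ2 H Wc Wp l k * Tm⁻¹).trace).re := by
    rw [E1, E2, E3, E4]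
    linarith [SP, SQ, kσ, hσtr]
  -- rewrite ζ
  have hdetm : IsUnit Tm.det := isUnit_iff_ne_zero.mpr hTmPD.det_pos.ne'
  have hz_eq : z = 2 * ((Nu : ℝ) - ((Dcmat σ2 H Wc Wp l k * Tm⁻¹).trace).re) := by
    rw [hzdef]
    unfold zetaC
    rw [← hTmdef]
    have hS : Scmat H Wc l k = Tm - Dcmat σ2 H Wc Wp l k := by
      rw [hTmdef]; abel
    rw [hS, Matrix.sub_mul, Matrix.mul_nonsing_inv _ hdetm, Matrix.trace_sub,
      Matrix.trace_one, Complex.sub_re, Complex.natCast_re]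
    norm_num
  have hz_nonneg : 0 ≤ z := by
    rw [hzdef]
    unfold zetaC
    rw [← hTmdef]
    have : 0 ≤ (((H l k l * Wc l) * (H l k l * Wc l)ᴴ * Tm⁻¹).trace).re :=
      traceRe_mul_nonneg _ hTmPD.inv.posSemidef
    have h2 : Scmat H Wc l k * Tm⁻¹ = (H l k l * Wc l) * (H l k l * Wc l)ᴴ * Tm⁻¹ := rfl
    rw [h2]
    linarith
  have hz_le : z ≤ 2 * ((Nu : ℝ) - (2 * A + 2 * B - C)) := by
    rw [hz_eq]; linarith
  -- scalar endgame
  have hsb : 0 < Real.sqrt zb := Real.sqrt_pos.mpr hζ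
  have hsn : 0 < Real.sqrt nn := Real.sqrt_pos.mpr hn
  have hzb_sq : Real.sqrt zb ^ 2 = zb := Real.sq_sqrt hζ.le
  have hkey2 : Real.sqrt z * (2 * Real.sqrt zb) ≤ zb + z := by
    nlinarith [sq_nonneg (Real.sqrt z - Real.sqrt zb), Real.sq_sqrt hz_nonneg,
      Real.sq_sqrt hζ.le]
  have hmain : Real.sqrt z * Real.sqrt zb
      ≤ Real.sqrt zb ^ 2 / 2 + ((Nu : ℝ) - 2 * A - 2 * B + C) := by
    rw [hzb_sq]; linarith [hkey2, hz_le]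
  have r1 : Real.sqrt (z / nn) = Real.sqrt z / Real.sqrt nn := Real.sqrt_div hz_nonneg nn
  have r2 : Real.sqrt (zb / (4 * nn)) = Real.sqrt zb / (2 * Real.sqrt nn) := by
    rw [Real.sqrt_div hζ.le, Real.sqrt_mul (by norm_num : (0:ℝ) ≤ 4),
      show Real.sqrt 4 = 2 by
        rw [show (4:ℝ) = 2 ^ 2 by norm_num, Real.sqrt_sq (by norm_num : (0:ℝ) ≤ 2)]]
  have r3 : Real.sqrt (nn * zb) = Real.sqrt nn * Real.sqrt zb := Real.sqrt_mul hn.le zb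
  rw [ge_iff_le, r1, r2, r3, ← sub_nonneg]
  have hfinal : -(qc * (Real.sqrt z / Real.sqrt nn))
      - (-(qc * (Real.sqrt zb / (2 * Real.sqrt nn)))
        - qc * (Nu : ℝ) / (Real.sqrt nn * Real.sqrt zb)
        + 2 * qc / (Real.sqrt nn * Real.sqrt zb) * A
        + 2 * qc / (Real.sqrt nn * Real.sqrt zb) * B
        - qc / (Real.sqrt nn * Real.sqrt zb) * C)
      = (qc / (Real.sqrt nn * Real.sqrt zb))
          * ((Real.sqrt zb ^ 2 / 2 + ((Nu : ℝ) - 2 * A - 2 * B + C))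
            - Real.sqrt z * Real.sqrt zb) := by
    field_simp
    ring
  rw [hfinal]
  exact mul_nonneg (div_nonneg hqc (mul_pos hsn hsb).le) (by linarith [hmain])

end RSMA
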